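/- arXiv:1206.5480 — 2 statements merged into one kernel-verified Lean document; each statement's English description precedes it below -/
import Mathlib

section
/- For every η > 0, the quantity W₁(η) = ∫_{-1}^{1} e^{η z²}(1−z²)(5z²−1) dz is strictly positive. -/
open Real

/-- For every `η > 0`, `W₁(η) = ∫_{-1}^{1} e^{η z²}(1−z²)(5z²−1) dz > 0`. -/
theorem stmt1 (η : ℝ) (hη : 0 < η) :
    0 < ∫ z in (-1:ℝ)..1, Real.exp (η * z ^ 2) * (1 - z ^ 2) * (5 * z ^ 2 - 1) := by
  have hpoly : (∫ z in (-1:ℝ)..1, (-5*z^4 + 6*z^2 - 1)) = 0 := by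
    have h := intervalIntegral.integral_eq_sub_of_hasDerivAt
      (f := fun z : ℝ => -z^5 + 2*z^3 - z) (f' := fun z : ℝ => -5*z^4 + 6*z^2 - 1)
      (a := -1) (b := 1)
      (fun x _ => by
        have : HasDerivAt (fun z : ℝ => -z^5 + 2*z^3 - z)
            (-(5*x^4) + 2*(3*x^2) - 1) x := by
          have h1 : HasDerivAt (fun z : ℝ => z^5) (5*x^4) x := by
            simpa using hasDerivAt_pow 5 x
          have h2 : HasDerivAt (fun z : ℝ => z^3) (3*x^2) x := by
            simpa using hasDerivAt_pow 3 x
          exact ((h1.fun_neg).fun_add (h2.const_mul 2)).fun_sub (hasDerivAt_id' x)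
        exact this.congr_deriv (by ring))
      ((by fun_prop : Continuous fun z : ℝ => -5*z^4 + 6*z^2 - 1).intervalIntegrable _ _)
    rw [h]; ring
  have h0 : (∫ z in (-1:ℝ)..1, Real.exp (η/5) * (-5*z^4 + 6*z^2 - 1)) = 0 := by
    rw [intervalIntegral.integral_const_mul, hpoly, mul_zero]
  rw [← h0]
  apply intervalIntegral.integral_lt_integral_of_continuousOn_of_le_of_exists_lt
    (by norm_num)
  · fun_prop
  · fun_prop
  · intro x hx
    have hx1 : x ≤ 1 := hx.2
    have hxm1 : -1 < x := hx.1
    have hP : 0 ≤ 1 - x^2 := by nlinarith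
    set A := Real.exp (η * x^2) with hA
    set B := Real.exp (η/5) with hB
    rcases le_or_gt (1/5 : ℝ) (x^2) with hc | hc
    · have hAB : B ≤ A := by
        apply Real.exp_le_exp.2; nlinarith
      have hQ : 0 ≤ 5*x^2 - 1 := by nlinarith
      nlinarith [mul_nonneg hP hQ]
    · have hAB : A ≤ B := by
        apply Real.exp_le_exp.2; nlinarith
      have hQ : 5*x^2 - 1 ≤ 0 := by nlinarith
      nlinarith [mul_nonneg hP (neg_nonneg.2 hQ), Real.exp_pos (η*x^2)]
  · refine ⟨0, by norm_num, ?_⟩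
    have h1 : 1 < Real.exp (η/5) := by
      have := Real.add_one_le_exp (η/5); nlinarith
    norm_num
    nlinarith
end

section
/- The function η ↦ e^{−η}·(A₀(η)(A₄(η)−A₆(η)) − A₂(η)(A₂(η)−A₄(η))) is strictly decreasing in η, where A_k(η) = ∫_{-1}^{1} z^k e^{η z²} dz. Indeed its derivative equals −(1/2)∫_{-1}^{1}∫_{-1}^{1} (x²−y²)²(1−x²−y²)² e^{η(x²+y²−1)} dx dy < 0. -/
open Real

/-- `A k η = ∫_{-1}^{1} z^k e^{η z²} dz`. -/
noncomputable def A (k : ℕ) (η : ℝ) : ℝ := ∫ z in (-1:ℝ)..1, z ^ k * Real.exp (η * z ^ 2)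

open intervalIntegral MeasureTheory Set Metric

lemma contA (k : ℕ) (η : ℝ) : Continuous (fun z : ℝ => z ^ k * Real.exp (η * z ^ 2)) := by
  fun_prop

lemma intblA (k : ℕ) (η a b : ℝ) :
    IntervalIntegrable (fun z : ℝ => z ^ k * Real.exp (η * z ^ 2)) volume a b :=
  (contA k η).intervalIntegrable a b

/-- Differentiating under the integral sign: `A k` has derivative `A (k+2)`. -/
lemma hasDerivA (k : ℕ) (η : ℝ) : HasDerivAt (A k) (A (k + 2) η) η := by
  have key := intervalIntegral.hasDerivAt_integral_of_dominated_loc_of_deriv_le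
    (F := fun (x : ℝ) (z : ℝ) => z ^ k * Real.exp (x * z ^ 2))
    (F' := fun (x : ℝ) (z : ℝ) => z ^ (k + 2) * Real.exp (x * z ^ 2))
    (x₀ := η) (a := -1) (b := 1) (μ := volume)
    (bound := fun _ => Real.exp (|η| + 1)) (s := ball η 1) (ball_mem_nhds η one_pos)
    ?_ ?_ ?_ ?_ ?_ ?_
  · exact key.2
  · filter_upwards with x using (contA k x).aestronglyMeasurable
  · exact intblA k η (-1) 1
  · exact (contA (k + 2) η).aestronglyMeasurable
  · filter_upwards with t ht x hx
    rw [Set.uIoc_of_le (by norm_num : (-1:ℝ) ≤ 1)] at ht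
    have ht1 : |t| ≤ 1 := abs_le.2 ⟨ht.1.le, ht.2⟩
    have ht2 : t ^ 2 ≤ 1 := by
      have := sq_abs t ▸ pow_le_one₀ (abs_nonneg t) ht1
      simpa [sq_abs] using this
    have h1 : ‖t ^ (k + 2)‖ ≤ 1 := by
      rw [Real.norm_eq_abs, abs_pow]
      exact pow_le_one₀ (abs_nonneg t) ht1
    have h2 : Real.exp (x * t ^ 2) ≤ Real.exp (|η| + 1) := by
      apply Real.exp_le_exp.2
      have hx' : |x| < |η| + 1 := by
        have := abs_sub_abs_le_abs_sub x η
        have hd : |x - η| < 1 := by simpa [Real.dist_eq] using mem_ball.1 hx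
        linarith
      calc x * t ^ 2 ≤ |x * t ^ 2| := le_abs_self _
        _ = |x| * t ^ 2 := by rw [abs_mul, abs_of_nonneg (sq_nonneg t)]
        _ ≤ |x| * 1 := by nlinarith [abs_nonneg x]
        _ ≤ |η| + 1 := by linarith
    calc ‖t ^ (k + 2) * Real.exp (x * t ^ 2)‖
        = ‖t ^ (k + 2)‖ * Real.exp (x * t ^ 2) := by
          rw [norm_mul, Real.norm_eq_abs (Real.exp _), abs_of_pos (Real.exp_pos _)]
      _ ≤ 1 * Real.exp (|η| + 1) := by
          exact mul_le_mul h1 h2 (Real.exp_pos _).le one_pos.le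
      _ = Real.exp (|η| + 1) := one_mul _
  · exact intervalIntegrable_const
  · filter_upwards with t _ x _
    have : HasDerivAt (fun x : ℝ => x * t ^ 2) (t ^ 2) x := by
      simpa using (hasDerivAt_id x).mul_const (t ^ 2)
    have h := (this.exp).const_mul (t ^ k)
    refine h.congr_deriv ?_
    rw [pow_add]
    ring

/-- Splitting an integral of a 5-term combination of monomials times the Gaussian-type weight. -/
lemma int5 (η c0 c1 c2 c3 c4 : ℝ) (j0 j1 j2 j3 j4 : ℕ) :
    (∫ t in (-1:ℝ)..1,
        (c0 * (t ^ j0 * Real.exp (η * t ^ 2)) + c1 * (t ^ j1 * Real.exp (η * t ^ 2))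
          + c2 * (t ^ j2 * Real.exp (η * t ^ 2)) + c3 * (t ^ j3 * Real.exp (η * t ^ 2))
          + c4 * (t ^ j4 * Real.exp (η * t ^ 2))))
      = c0 * A j0 η + c1 * A j1 η + c2 * A j2 η + c3 * A j3 η + c4 * A j4 η := by
  have i0 := (intblA j0 η (-1) 1).const_mul c0
  have i1 := (intblA j1 η (-1) 1).const_mul c1
  have i2 := (intblA j2 η (-1) 1).const_mul c2
  have i3 := (intblA j3 η (-1) 1).const_mul c3
  have i4 := (intblA j4 η (-1) 1).const_mul c4
  rw [intervalIntegral.integral_add (((i0.add i1).add i2).add i3) i4,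
    intervalIntegral.integral_add ((i0.add i1).add i2) i3,
    intervalIntegral.integral_add (i0.add i1) i2,
    intervalIntegral.integral_add i0 i1,
    intervalIntegral.integral_const_mul, intervalIntegral.integral_const_mul,
    intervalIntegral.integral_const_mul, intervalIntegral.integral_const_mul,
    intervalIntegral.integral_const_mul]
  rfl

lemma inner_eq (η x : ℝ) :
    (∫ y in (-1:ℝ)..1,
        (x ^ 2 - y ^ 2) ^ 2 * (1 - x ^ 2 - y ^ 2) ^ 2 * Real.exp (η * (x ^ 2 + y ^ 2 - 1)))
      = (Real.exp (-η) * Real.exp (η * x ^ 2)) *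
        ((x ^ 8 - 2 * x ^ 6 + x ^ 4) * A 0 η + (2 * x ^ 4 - 2 * x ^ 2) * A 2 η
          + (1 + 2 * x ^ 2 - 2 * x ^ 4) * A 4 η + (-2) * A 6 η + 1 * A 8 η) := by
  have h : ∀ y : ℝ,
      (x ^ 2 - y ^ 2) ^ 2 * (1 - x ^ 2 - y ^ 2) ^ 2 * Real.exp (η * (x ^ 2 + y ^ 2 - 1))
        = (Real.exp (-η) * Real.exp (η * x ^ 2)) *
          ((x ^ 8 - 2 * x ^ 6 + x ^ 4) * (y ^ 0 * Real.exp (η * y ^ 2))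
            + (2 * x ^ 4 - 2 * x ^ 2) * (y ^ 2 * Real.exp (η * y ^ 2))
            + (1 + 2 * x ^ 2 - 2 * x ^ 4) * (y ^ 4 * Real.exp (η * y ^ 2))
            + (-2) * (y ^ 6 * Real.exp (η * y ^ 2))
            + 1 * (y ^ 8 * Real.exp (η * y ^ 2))) := by
    intro y
    rw [show η * (x ^ 2 + y ^ 2 - 1) = -η + η * x ^ 2 + η * y ^ 2 by ring,
      Real.exp_add, Real.exp_add]
    ring
  simp_rw [h, intervalIntegral.integral_const_mul]
  rw [int5]

lemma double_eq (η : ℝ) :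
    (∫ x in (-1:ℝ)..1, ∫ y in (-1:ℝ)..1,
        (x ^ 2 - y ^ 2) ^ 2 * (1 - x ^ 2 - y ^ 2) ^ 2 * Real.exp (η * (x ^ 2 + y ^ 2 - 1)))
      = Real.exp (-η) *
        (2 * A 0 η * A 8 η - 4 * A 0 η * A 6 η + 2 * A 0 η * A 4 η
          + 4 * A 2 η * A 4 η - 2 * A 2 η ^ 2 - 2 * A 4 η ^ 2) := by
  simp_rw [inner_eq]
  have h : ∀ x : ℝ,
      (Real.exp (-η) * Real.exp (η * x ^ 2)) *
        ((x ^ 8 - 2 * x ^ 6 + x ^ 4) * A 0 η + (2 * x ^ 4 - 2 * x ^ 2) * A 2 η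
          + (1 + 2 * x ^ 2 - 2 * x ^ 4) * A 4 η + (-2) * A 6 η + 1 * A 8 η)
      = Real.exp (-η) *
          (A 0 η * (x ^ 8 * Real.exp (η * x ^ 2))
            + (-2 * A 0 η) * (x ^ 6 * Real.exp (η * x ^ 2))
            + (A 0 η + 2 * A 2 η - 2 * A 4 η) * (x ^ 4 * Real.exp (η * x ^ 2))
            + (2 * A 4 η - 2 * A 2 η) * (x ^ 2 * Real.exp (η * x ^ 2))
            + (A 4 η - 2 * A 6 η + A 8 η) * (x ^ 0 * Real.exp (η * x ^ 2))) := by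
    intro x; ring
  simp_rw [h, intervalIntegral.integral_const_mul]
  rw [int5]
  ring

/-- The function `η ↦ e^{−η}·(A₀(A₄−A₆) − A₂(A₂−A₄))` is strictly decreasing, and its
derivative equals `−(1/2)∫∫ (x²−y²)²(1−x²−y²)² e^{η(x²+y²−1)} dx dy < 0`. -/
theorem stmt2 :
    StrictAnti (fun η : ℝ =>
      Real.exp (-η) * (A 0 η * (A 4 η - A 6 η) - A 2 η * (A 2 η - A 4 η))) ∧
    ∀ η : ℝ,
      HasDerivAt (fun η : ℝ =>
          Real.exp (-η) * (A 0 η * (A 4 η - A 6 η) - A 2 η * (A 2 η - A 4 η)))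
        (-(1/2) * ∫ x in (-1:ℝ)..1, ∫ y in (-1:ℝ)..1,
          (x ^ 2 - y ^ 2) ^ 2 * (1 - x ^ 2 - y ^ 2) ^ 2
            * Real.exp (η * (x ^ 2 + y ^ 2 - 1))) η ∧
      -(1/2) * (∫ x in (-1:ℝ)..1, ∫ y in (-1:ℝ)..1,
          (x ^ 2 - y ^ 2) ^ 2 * (1 - x ^ 2 - y ^ 2) ^ 2
            * Real.exp (η * (x ^ 2 + y ^ 2 - 1))) < 0 := by
  -- The derivative statement
  have hderiv : ∀ η : ℝ,
      HasDerivAt (fun η : ℝ =>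
          Real.exp (-η) * (A 0 η * (A 4 η - A 6 η) - A 2 η * (A 2 η - A 4 η)))
        (-(1/2) * ∫ x in (-1:ℝ)..1, ∫ y in (-1:ℝ)..1,
          (x ^ 2 - y ^ 2) ^ 2 * (1 - x ^ 2 - y ^ 2) ^ 2
            * Real.exp (η * (x ^ 2 + y ^ 2 - 1))) η := by
    intro η
    have h0 := hasDerivA 0 η
    have h2 := hasDerivA 2 η
    have h4 := hasDerivA 4 η
    have h6 := hasDerivA 6 η
    have hexp : HasDerivAt (fun η : ℝ => Real.exp (-η)) (-Real.exp (-η)) η := by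
      simpa using ((hasDerivAt_id η).neg).exp
    have hg : HasDerivAt
        (fun η : ℝ => A 0 η * (A 4 η - A 6 η) - A 2 η * (A 2 η - A 4 η))
        (A 2 η * (A 4 η - A 6 η) + A 0 η * (A 6 η - A 8 η)
          - (A 4 η * (A 2 η - A 4 η) + A 2 η * (A 4 η - A 6 η))) η :=
      (h0.mul (h4.sub h6)).sub (h2.mul (h2.sub h4))
    have hf := hexp.fun_mul hg
    refine hf.congr_deriv ?_
    rw [double_eq]
    ring
  -- Positivity of the double integral
  have hpos : ∀ η : ℝ,
      0 < ∫ x in (-1:ℝ)..1, ∫ y in (-1:ℝ)..1,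
        (x ^ 2 - y ^ 2) ^ 2 * (1 - x ^ 2 - y ^ 2) ^ 2
          * Real.exp (η * (x ^ 2 + y ^ 2 - 1)) := by
    intro η
    set c : ℝ := (63/100) ^ 2 * (9/50) ^ 2 * Real.exp (-|η|) with hc
    have hcpos : 0 < c := by positivity
    have hPcont : Continuous (fun p : ℝ × ℝ =>
        (p.1 ^ 2 - p.2 ^ 2) ^ 2 * (1 - p.1 ^ 2 - p.2 ^ 2) ^ 2
          * Real.exp (η * (p.1 ^ 2 + p.2 ^ 2 - 1))) := by fun_prop
    have hPnn : ∀ x y : ℝ, 0 ≤ (x ^ 2 - y ^ 2) ^ 2 * (1 - x ^ 2 - y ^ 2) ^ 2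
        * Real.exp (η * (x ^ 2 + y ^ 2 - 1)) := by
      intro x y; positivity
    have hicont : ∀ x : ℝ, Continuous (fun y : ℝ =>
        (x ^ 2 - y ^ 2) ^ 2 * (1 - x ^ 2 - y ^ 2) ^ 2
          * Real.exp (η * (x ^ 2 + y ^ 2 - 1))) := by
      intro x; fun_prop
    -- pointwise lower bound on the rectangle
    have hrect : ∀ x ∈ Icc (4/5 : ℝ) (9/10), ∀ y ∈ Icc (0:ℝ) (1/10),
        c ≤ (x ^ 2 - y ^ 2) ^ 2 * (1 - x ^ 2 - y ^ 2) ^ 2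
          * Real.exp (η * (x ^ 2 + y ^ 2 - 1)) := by
      intro x hx y hy
      obtain ⟨hx1, hx2⟩ := hx
      obtain ⟨hy1, hy2⟩ := hy
      have hx2sq : x ^ 2 ≤ 81/100 := by nlinarith
      have hx1sq : 16/25 ≤ x ^ 2 := by nlinarith
      have hy2sq : y ^ 2 ≤ 1/100 := by nlinarith
      have hy1sq : 0 ≤ y ^ 2 := sq_nonneg y
      have h1 : (63/100 : ℝ) ≤ x ^ 2 - y ^ 2 := by linarith
      have h2 : (9/50 : ℝ) ≤ 1 - x ^ 2 - y ^ 2 := by linarith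
      have hexp : Real.exp (-|η|) ≤ Real.exp (η * (x ^ 2 + y ^ 2 - 1)) := by
        apply Real.exp_le_exp.2
        have ht : |x ^ 2 + y ^ 2 - 1| ≤ 1 := by
          rw [abs_le]; constructor <;> nlinarith
        calc -|η| ≤ -|η * (x ^ 2 + y ^ 2 - 1)| := by
              rw [neg_le_neg_iff, abs_mul]
              calc |η| * |x ^ 2 + y ^ 2 - 1| ≤ |η| * 1 := by
                    exact mul_le_mul_of_nonneg_left ht (abs_nonneg η)
                _ = |η| := mul_one _
          _ ≤ η * (x ^ 2 + y ^ 2 - 1) := neg_abs_le _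
      calc c = (63/100) ^ 2 * (9/50) ^ 2 * Real.exp (-|η|) := hc
        _ ≤ (x ^ 2 - y ^ 2) ^ 2 * (1 - x ^ 2 - y ^ 2) ^ 2
            * Real.exp (η * (x ^ 2 + y ^ 2 - 1)) := by
          apply mul_le_mul
          · apply mul_le_mul
            · exact pow_le_pow_left₀ (by norm_num) h1 2
            · exact pow_le_pow_left₀ (by norm_num) h2 2
            · positivity
            · positivity
          · exact hexp
          · positivity
          · positivity
    -- inner integral lower bound for x in the slab
    have hinner : ∀ x ∈ Icc (4/5 : ℝ) (9/10),
        c / 10 ≤ ∫ y in (-1:ℝ)..1,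
          (x ^ 2 - y ^ 2) ^ 2 * (1 - x ^ 2 - y ^ 2) ^ 2
            * Real.exp (η * (x ^ 2 + y ^ 2 - 1)) := by
      intro x hx
      have step1 : (∫ y in (0:ℝ)..(1/10),
          (x ^ 2 - y ^ 2) ^ 2 * (1 - x ^ 2 - y ^ 2) ^ 2
            * Real.exp (η * (x ^ 2 + y ^ 2 - 1)))
          ≤ ∫ y in (-1:ℝ)..1,
          (x ^ 2 - y ^ 2) ^ 2 * (1 - x ^ 2 - y ^ 2) ^ 2
            * Real.exp (η * (x ^ 2 + y ^ 2 - 1)) := by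
        apply intervalIntegral.integral_mono_interval (by norm_num) (by norm_num) (by norm_num)
        · filter_upwards with y using hPnn x y
        · exact (hicont x).intervalIntegrable _ _
      have step2 : c / 10 ≤ ∫ y in (0:ℝ)..(1/10),
          (x ^ 2 - y ^ 2) ^ 2 * (1 - x ^ 2 - y ^ 2) ^ 2
            * Real.exp (η * (x ^ 2 + y ^ 2 - 1)) := by
        have := intervalIntegral.integral_mono_on (a := (0:ℝ)) (b := 1/10) (μ := volume)
          (f := fun _ => c)
          (g := fun y => (x ^ 2 - y ^ 2) ^ 2 * (1 - x ^ 2 - y ^ 2) ^ 2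
            * Real.exp (η * (x ^ 2 + y ^ 2 - 1)))
          (by norm_num) intervalIntegrable_const ((hicont x).intervalIntegrable _ _)
          (fun y hy => hrect x hx y hy)
        rw [intervalIntegral.integral_const, smul_eq_mul] at this
        calc c / 10 = (1/10 - 0) * c := by ring
          _ ≤ _ := this
      linarith
    -- outer integral
    set F : ℝ → ℝ := fun x => ∫ y in (-1:ℝ)..1,
        (x ^ 2 - y ^ 2) ^ 2 * (1 - x ^ 2 - y ^ 2) ^ 2
          * Real.exp (η * (x ^ 2 + y ^ 2 - 1)) with hF
    have hFcont : Continuous F := by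
      apply intervalIntegral.continuous_parametric_intervalIntegral_of_continuous'
        (f := fun x y : ℝ => (x ^ 2 - y ^ 2) ^ 2 * (1 - x ^ 2 - y ^ 2) ^ 2
          * Real.exp (η * (x ^ 2 + y ^ 2 - 1)))
      exact hPcont
    have hFnn : ∀ x : ℝ, 0 ≤ F x := by
      intro x
      apply intervalIntegral.integral_nonneg (by norm_num)
      intro y _
      exact hPnn x y
    have stepA : (∫ x in (4/5 : ℝ)..(9/10), F x) ≤ ∫ x in (-1:ℝ)..1, F x := by
      apply intervalIntegral.integral_mono_interval (by norm_num) (by norm_num) (by norm_num)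
      · filter_upwards with x using hFnn x
      · exact hFcont.intervalIntegrable _ _
    have stepB : (9/10 - 4/5 : ℝ) * (c / 10) ≤ ∫ x in (4/5 : ℝ)..(9/10), F x := by
      have := intervalIntegral.integral_mono_on (a := (4/5:ℝ)) (b := 9/10) (μ := volume)
        (f := fun _ => c / 10) (g := F)
        (by norm_num) intervalIntegrable_const (hFcont.intervalIntegrable _ _)
        (fun x hx => hinner x hx)
      rw [intervalIntegral.integral_const, smul_eq_mul] at this
      exact this
    have : (0:ℝ) < (9/10 - 4/5 : ℝ) * (c / 10) := by
      have : (0:ℝ) < (9/10 - 4/5 : ℝ) := by norm_num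
      positivity
    calc (0:ℝ) < (9/10 - 4/5 : ℝ) * (c / 10) := this
      _ ≤ ∫ x in (4/5 : ℝ)..(9/10), F x := stepB
      _ ≤ ∫ x in (-1:ℝ)..1, F x := stepA
  refine ⟨?_, fun η => ⟨hderiv η, by nlinarith [hpos η]⟩⟩
  apply strictAnti_of_deriv_neg
  intro x
  rw [(hderiv x).deriv]
  nlinarith [hpos x]
end
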